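/- arXiv:math/0309448 — 2 statements merged into one kernel-verified Lean document; each statement's English description precedes it below -/
import Mathlib

section
/- Let A = B #_σ H be a crossed product algebra with invertible 2-cocycle σ. Then the extension A / B is H-Galois: the canonical map can : A ⊗_B A → A ⊗ H, induced by x ⊗ y ↦ (x ⊗ 1)·ψ(y) = Σ x y₍₀₎ ⊗ y₍₁₎, is bijective. -/
open TensorProduct LinearMap

noncomputable section

namespace CrossedGalois

/-- Convolution product of two linear maps from a coalgebra to an algebra. -/
def conv (k : Type) [Field k] {C B : Type} [AddCommGroup C] [Module k C] [Coalgebra k C]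
    [Ring B] [Algebra k B] (f g : C →ₗ[k] B) : C →ₗ[k] B :=
  (LinearMap.mul' k B) ∘ₗ (TensorProduct.map f g) ∘ₗ (Coalgebra.comul (R := k))

/-- The unit `η ∘ ε` for the convolution product. -/
def convOne (k : Type) [Field k] (C B : Type) [AddCommGroup C] [Module k C] [Coalgebra k C]
    [Ring B] [Algebra k B] : C →ₗ[k] B :=
  (Algebra.linearMap k B) ∘ₗ (Coalgebra.counit (R := k))

/-- Convolution invertibility. -/
def ConvInvertible (k : Type) [Field k] {C B : Type} [AddCommGroup C] [Module k C]
    [Coalgebra k C] [Ring B] [Algebra k B] (f : C →ₗ[k] B) : Prop :=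
  ∃ g : C →ₗ[k] B, conv k f g = convOne k C B ∧ conv k g f = convOne k C B

variable (k : Type) [Field k]

section CrossedProduct

variable (B H : Type) [Ring B] [Algebra k B] [Ring H] [Bialgebra k H]

/-- `h ↦ α (h ⊗ b)`. -/
def actOn (α : H ⊗[k] B →ₗ[k] B) (b : B) : H →ₗ[k] B :=
  α ∘ₗ ((TensorProduct.mk k H B).flip b)

/-- `α` is a weak action of the bialgebra `H` on the algebra `B` :
`h · (ab) = Σ (h₁ · a)(h₂ · b)` and `h · 1 = ε(h) 1`. -/
structure IsWeakAction (α : H ⊗[k] B →ₗ[k] B) : Prop where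
  smul_mul : ∀ (h : H) (a b : B),
    α (h ⊗ₜ (a * b)) =
      LinearMap.mul' k B ((TensorProduct.map α α)
        ((TensorProduct.tensorTensorTensorComm k H H B B)
          ((Coalgebra.comul (R := k) h) ⊗ₜ (a ⊗ₜ b))))
  smul_one : ∀ h : H, α (h ⊗ₜ (1 : B)) = (Coalgebra.counit (R := k) h) • (1 : B)

/-- The 2-cocycle condition
`Σ (h₁ · σ(g₁,l₁)) σ(h₂, g₂l₂) = Σ σ(h₁,g₁) σ(h₂g₂, l)`
together with the normalisation `σ(h,1) = σ(1,h) = ε(h)1`. -/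
structure IsCocycle (α : H ⊗[k] B →ₗ[k] B) (σ : H ⊗[k] H →ₗ[k] B) : Prop where
  cocycle :
    conv k (α ∘ₗ lTensor H σ) (σ ∘ₗ lTensor H (LinearMap.mul' k H)) =
    conv k (σ ∘ₗ lTensor H ((TensorProduct.rid k H).toLinearMap ∘ₗ
              lTensor H (Coalgebra.counit (R := k))))
           (σ ∘ₗ (rTensor H (LinearMap.mul' k H)) ∘ₗ
              (TensorProduct.assoc k H H H).symm.toLinearMap)
  norm_right : ∀ h : H, σ (h ⊗ₜ (1 : H)) = (Coalgebra.counit (R := k) h) • (1 : B)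
  norm_left : ∀ h : H, σ ((1 : H) ⊗ₜ h) = (Coalgebra.counit (R := k) h) • (1 : B)

/-- `B` is a twisted `H`-module:  `1 · b = b` and
`Σ (h₁ · (g₁ · b)) σ(h₂,g₂) = Σ σ(h₁,g₁) ((h₂g₂) · b)`. -/
structure IsTwistedModule (α : H ⊗[k] B →ₗ[k] B) (σ : H ⊗[k] H →ₗ[k] B) : Prop where
  one_smul : ∀ b : B, α ((1 : H) ⊗ₜ b) = b
  twisted : ∀ b : B,
    conv k (α ∘ₗ lTensor H (actOn k B H α b)) σ =
    conv k σ ((actOn k B H α b) ∘ₗ LinearMap.mul' k H)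

/-- The multiplication of the crossed product `B #_σ H`:
`(a # h)(b # g) = Σ a (h₁·b) σ(h₂,g₁) # h₃g₂`. -/
def cpMul (α : H ⊗[k] B →ₗ[k] B) (σ : H ⊗[k] H →ₗ[k] B) :
    (B ⊗[k] H) ⊗[k] (B ⊗[k] H) →ₗ[k] B ⊗[k] H :=
  (rTensor H (LinearMap.mul' k B)) ∘ₗ
  (TensorProduct.assoc k B B H).symm.toLinearMap ∘ₗ
  (lTensor B
    ((rTensor H (LinearMap.mul' k B)) ∘ₗ
     (TensorProduct.assoc k B B H).symm.toLinearMap ∘ₗ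
     (TensorProduct.map α (TensorProduct.map σ (LinearMap.mul' k H))) ∘ₗ
     (lTensor (H ⊗[k] B) (TensorProduct.tensorTensorTensorComm k H H H H).toLinearMap) ∘ₗ
     (TensorProduct.tensorTensorTensorComm k H (H ⊗[k] H) B (H ⊗[k] H)).toLinearMap ∘ₗ
     (TensorProduct.map ((lTensor H (Coalgebra.comul (R := k))) ∘ₗ (Coalgebra.comul (R := k)))
       (lTensor B (Coalgebra.comul (R := k)))))) ∘ₗ
  (TensorProduct.assoc k B H (B ⊗[k] H)).toLinearMap

/-- The unit `1 # 1` of the crossed product. -/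
def cpOne : B ⊗[k] H := (1 : B) ⊗ₜ (1 : H)

/-- The crossed product multiplication is associative with unit `1 ⊗ 1`. -/
def IsCpAlgebra (α : H ⊗[k] B →ₗ[k] B) (σ : H ⊗[k] H →ₗ[k] B) : Prop :=
  (∀ x y z : B ⊗[k] H,
      cpMul k B H α σ ((cpMul k B H α σ (x ⊗ₜ y)) ⊗ₜ z) =
      cpMul k B H α σ (x ⊗ₜ (cpMul k B H α σ (y ⊗ₜ z)))) ∧
  (∀ x : B ⊗[k] H, cpMul k B H α σ ((cpOne k B H) ⊗ₜ x) = x) ∧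
  (∀ x : B ⊗[k] H, cpMul k B H α σ (x ⊗ₜ (cpOne k B H)) = x)

/-- The right `H`-coaction `id_B ⊗ Δ` on `B ⊗ H`. -/
def cpCoact : B ⊗[k] H →ₗ[k] (B ⊗[k] H) ⊗[k] H :=
  (TensorProduct.assoc k B H H).symm.toLinearMap ∘ₗ lTensor B (Coalgebra.comul (R := k))

end CrossedProduct

section Galois

variable (H : Type) [Ring H] [Bialgebra k H]

/-- The submodule of `A ⊗ A` spanned by `xb ⊗ y - x ⊗ by` for `b` in a given subset `S`,
with respect to a given multiplication map `M`; its quotient is `A ⊗_B A`. -/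
def midRel {A : Type} [AddCommGroup A] [Module k A]
    (M : A ⊗[k] A →ₗ[k] A) (S : Set A) : Submodule k (A ⊗[k] A) :=
  Submodule.span k {z | ∃ x y b, b ∈ S ∧
    z = (M (x ⊗ₜ b)) ⊗ₜ y - x ⊗ₜ (M (b ⊗ₜ y))}

/-- The map `can' : A ⊗ A → A ⊗ H`, `x ⊗ y ↦ Σ x y₍₀₎ ⊗ y₍₁₎`. -/
def canMap {A : Type} [AddCommGroup A] [Module k A]
    (M : A ⊗[k] A →ₗ[k] A) (ρ : A →ₗ[k] A ⊗[k] H) : A ⊗[k] A →ₗ[k] A ⊗[k] H :=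
  (rTensor H M) ∘ₗ (TensorProduct.assoc k A A H).symm.toLinearMap ∘ₗ (lTensor A ρ)

/-- The extension is `H`-Galois: the canonical map descends to a bijection
`A ⊗_B A → A ⊗ H`. -/
def IsGalois {A : Type} [AddCommGroup A] [Module k A]
    (M : A ⊗[k] A →ₗ[k] A) (ρ : A →ₗ[k] A ⊗[k] H) (S : Set A) : Prop :=
  ∃ can : ((A ⊗[k] A) ⧸ midRel k M S) →ₗ[k] A ⊗[k] H,
    can ∘ₗ (midRel k M S).mkQ = canMap k H M ρ ∧ Function.Bijective can

/-- `A` is a right `H`-comodule algebra. -/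
structure IsComodAlg {A : Type} [Ring A] [Algebra k A]
    (ρ : A →ₗ[k] A ⊗[k] H) : Prop where
  coassoc : ∀ a : A, (rTensor H ρ) (ρ a) =
    (TensorProduct.assoc k A H H).symm ((lTensor A (Coalgebra.comul (R := k))) (ρ a))
  counit_id : ∀ a : A,
    (TensorProduct.rid k A) ((lTensor A (Coalgebra.counit (R := k))) (ρ a)) = a
  mul : ∀ a b : A, ρ (a * b) = ρ a * ρ b
  one : ρ 1 = 1

end Galois

end CrossedGalois

namespace CrossedGalois


section Toolkit

variable {k : Type} [Field k]
variable {M N P Q M' N' P' : Type}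
  [AddCommGroup M] [Module k M] [AddCommGroup N] [Module k N]
  [AddCommGroup P] [Module k P] [AddCommGroup Q] [Module k Q]
  [AddCommGroup M'] [Module k M'] [AddCommGroup N'] [Module k N']
  [AddCommGroup P'] [Module k P']

lemma assoc_symm_tmul_left (x : M) (z : N ⊗[k] P) :
    (TensorProduct.assoc k M N P).symm (x ⊗ₜ z)
      = rTensor P ((TensorProduct.mk k M N) x) z := by
  induction z using TensorProduct.induction_on with
  | zero => simp [tmul_zero]
  | tmul n p => simp
  | add u v hu hv => simp [tmul_add, hu, hv]

lemma assoc_tmul_right (z : M ⊗[k] N) (y : P) :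
    (TensorProduct.assoc k M N P) (z ⊗ₜ y)
      = lTensor M ((TensorProduct.mk k N P).flip y) z := by
  induction z using TensorProduct.induction_on with
  | zero => simp
  | tmul m n => simp
  | add u v hu hv => simp [add_tmul, hu, hv]

lemma assoc_tmul_pair (x : M) (y : N) (w : P ⊗[k] Q) :
    (TensorProduct.assoc k M N (P ⊗[k] Q)) ((x ⊗ₜ y) ⊗ₜ w) = x ⊗ₜ (y ⊗ₜ w) := by
  induction w using TensorProduct.induction_on with
  | zero => simp [tmul_zero]
  | tmul p q => simp
  | add u v hu hv => simp [tmul_add, hu, hv]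

lemma ttt_tmul_right (z : M ⊗[k] N) (x : P) (y : Q) :
    (TensorProduct.tensorTensorTensorComm k M N P Q) (z ⊗ₜ (x ⊗ₜ y))
      = TensorProduct.map ((TensorProduct.mk k M P).flip x)
          ((TensorProduct.mk k N Q).flip y) z := by
  induction z using TensorProduct.induction_on with
  | zero => simp
  | tmul m n => simp
  | add u v hu hv => simp [add_tmul, hu, hv]

lemma ttt_tmul_left (x : M) (y : N) (z : P ⊗[k] Q) :
    (TensorProduct.tensorTensorTensorComm k M N P Q) ((x ⊗ₜ y) ⊗ₜ z)
      = TensorProduct.map ((TensorProduct.mk k M P) x)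
          ((TensorProduct.mk k N Q) y) z := by
  induction z using TensorProduct.induction_on with
  | zero => simp [tmul_zero]
  | tmul p q => simp
  | add u v hu hv => simp [tmul_add, hu, hv]

end Toolkit

section Toolkit3

variable {k : Type} [Field k]
variable {M N P : Type}
  [AddCommGroup M] [Module k M] [AddCommGroup N] [Module k N]
  [AddCommGroup P] [Module k P]

lemma assoc_symm_lTensor_mk (W : M ⊗[k] N) (y : P) :
    (TensorProduct.assoc k M N P).symm (lTensor M ((TensorProduct.mk k N P).flip y) W)
      = W ⊗ₜ y := by
  rw [← assoc_tmul_right, LinearEquiv.symm_apply_apply]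

end Toolkit3

section Toolkit2

variable {k : Type} [Field k] {B : Type} [Ring B] [Algebra k B]
variable {N : Type} [AddCommGroup N] [Module k N]

lemma mul'_comp_mk (a : B) : (mul' k B) ∘ₗ (TensorProduct.mk k B B a) = mulLeft k a := by
  ext b; simp [mul'_apply]

lemma mulLeft_one' : mulLeft k (1 : B) = LinearMap.id := by
  ext b; simp

lemma rTensor_mul'_assoc_symm (a : B) (z : B ⊗[k] N) :
    rTensor N (mul' k B) ((TensorProduct.assoc k B B N).symm (a ⊗ₜ z))
      = rTensor N (mulLeft k a) z := by
  rw [assoc_symm_tmul_left, ← comp_apply, ← rTensor_comp, mul'_comp_mk]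

end Toolkit2

section Coll

variable {k : Type} [Field k] {C : Type} [AddCommGroup C] [Module k C] [Coalgebra k C]

open Coalgebra

/-- `(ε ⊗ id) ∘ Δ`-collapse as a linear map `C ⊗ C → C`. -/
noncomputable def epsL (k C : Type) [Field k] [AddCommGroup C] [Module k C] [Coalgebra k C] :
    C ⊗[k] C →ₗ[k] C :=
  (TensorProduct.lid k C).toLinearMap ∘ₗ (rTensor C (counit (R := k)))

/-- `(id ⊗ ε) ∘ Δ`-collapse as a linear map `C ⊗ C → C`. -/
noncomputable def epsR (k C : Type) [Field k] [AddCommGroup C] [Module k C] [Coalgebra k C] :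
    C ⊗[k] C →ₗ[k] C :=
  (TensorProduct.rid k C).toLinearMap ∘ₗ (lTensor C (counit (R := k)))

lemma epsL_comul : (epsL k C) ∘ₗ (comul (R := k)) = LinearMap.id := by
  ext c
  simp [epsL, rTensor_counit_comul]

lemma epsR_comul : (epsR k C) ∘ₗ (comul (R := k)) = LinearMap.id := by
  ext c
  simp [epsR, lTensor_counit_comul]

end Coll

section Eval

variable {k : Type} [Field k] {B H : Type} [Ring B] [Algebra k B] [Ring H] [Bialgebra k H]
variable (α : H ⊗[k] B →ₗ[k] B) (σ : H ⊗[k] H →ₗ[k] B)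

open Coalgebra

/-- The core of the crossed-product multiplication, as a linear map on the
comultiplication tower `(Δ ⊗ 1)(Δ f)`, with `b` and `w = Δ g` as parameters. -/
noncomputable def Plmap (b : B) (w : H ⊗[k] H) :
    ((H ⊗[k] H) ⊗[k] H) →ₗ[k] B ⊗[k] H :=
  (rTensor H (mul' k B)) ∘ₗ (TensorProduct.assoc k B B H).symm.toLinearMap ∘ₗ
  (TensorProduct.map (actOn k B H α b)
    ((TensorProduct.map σ (mul' k H)) ∘ₗ
      (TensorProduct.tensorTensorTensorComm k H H H H).toLinearMap ∘ₗ
      ((TensorProduct.mk k (H ⊗[k] H) (H ⊗[k] H)).flip w))) ∘ₗ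
  (TensorProduct.assoc k H H H).toLinearMap

lemma cpMul_tmul (a b : B) (f g : H) :
    cpMul k B H α σ ((a ⊗ₜ f) ⊗ₜ (b ⊗ₜ g)) =
      rTensor H (mulLeft k a)
        (Plmap α σ b (comul (R := k) g) (rTensor H (comul (R := k)) (comul f))) := by
  rw [cpMul, Plmap]
  simp only [coe_comp, Function.comp_apply, LinearEquiv.coe_coe]
  rw [assoc_tmul, lTensor_tmul, rTensor_mul'_assoc_symm]
  congr 1
  simp only [coe_comp, Function.comp_apply, LinearEquiv.coe_coe]
  rw [map_tmul, coe_comp, Function.comp_apply, lTensor_tmul, ttt_tmul_right]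
  rw [← comp_apply (lTensor (H ⊗[k] B) _), lTensor_comp_map]
  rw [← comp_apply (TensorProduct.map α _), ← TensorProduct.map_comp]
  rw [Coalgebra.coassoc_apply]
  rfl

end Eval

section Eval2

variable {k : Type} [Field k] {B H : Type} [Ring B] [Algebra k B] [Ring H] [Bialgebra k H]
variable (α : H ⊗[k] B →ₗ[k] B) (σ : H ⊗[k] H →ₗ[k] B)

open Coalgebra

/-- `Σ σ(f₁ ⊗ w₁) ⊗ f₂ w₂` as a linear map of `Δ f`, with `w = Δ g` a parameter. -/
noncomputable def Xmap (w : H ⊗[k] H) : H ⊗[k] H →ₗ[k] B ⊗[k] H :=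
  (TensorProduct.map σ (mul' k H)) ∘ₗ
    (TensorProduct.tensorTensorTensorComm k H H H H).toLinearMap ∘ₗ
    ((TensorProduct.mk k (H ⊗[k] H) (H ⊗[k] H)).flip w)

lemma actOn_one (hWA : IsWeakAction k B H α) :
    actOn k B H α (1 : B) = (Algebra.linearMap k B) ∘ₗ (counit (R := k)) := by
  ext h
  simp [actOn, hWA.smul_one, Algebra.algebraMap_eq_smul_one]

lemma mulLeft_smul_one (c : k) :
    mulLeft k ((c • (1:B))) = c • (LinearMap.id (M := B)) := by
  ext b; simp [smul_mul_assoc]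

lemma Plmap_one_right
    (hσ1 : ∀ h : H, σ (h ⊗ₜ (1:H)) = (counit (R := k) h) • (1:B)) (b : B) :
    Plmap α σ b ((1:H) ⊗ₜ (1:H))
      = (rTensor H (actOn k B H α b)) ∘ₗ (rTensor H (epsR k H)) := by
  apply TensorProduct.ext'
  intro T z
  induction T using TensorProduct.induction_on with
  | zero => simp
  | add u v hu hv => simp only [add_tmul, map_add, hu, hv]
  | tmul x y =>
    simp only [Plmap, coe_comp, Function.comp_apply, LinearEquiv.coe_coe, flip_apply,
      TensorProduct.assoc_tmul, map_tmul, TensorProduct.mk_apply,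
      tensorTensorTensorComm_tmul, rTensor_tmul, epsR, TensorProduct.rid_tmul,
      lTensor_tmul, hσ1, mul'_apply, mul_one, TensorProduct.assoc_symm_tmul]
    simp [map_smul, mul_smul_comm, smul_tmul']

lemma Plmap_one_left (hWA : IsWeakAction k B H α) (w : H ⊗[k] H) :
    Plmap α σ (1 : B) w = (Xmap σ w) ∘ₗ (rTensor H (epsL k H)) := by
  apply TensorProduct.ext'
  intro T z
  induction T using TensorProduct.induction_on with
  | zero => simp
  | add u v hu hv => simp only [add_tmul, map_add, hu, hv]
  | tmul x y =>
    have h1 : actOn k B H α (1:B) x = (counit (R := k) x) • (1:B) := by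
      rw [actOn_one α hWA]; simp [Algebra.algebraMap_eq_smul_one]
    simp only [Plmap, Xmap, coe_comp, Function.comp_apply, LinearEquiv.coe_coe, flip_apply,
      TensorProduct.assoc_tmul, map_tmul, TensorProduct.mk_apply, h1, epsL,
      rTensor_tmul, TensorProduct.lid_tmul, ttt_tmul_left]
    simp only [← smul_tmul', map_smul, map_smul_left]
    rw [rTensor_mul'_assoc_symm, mulLeft_one', rTensor_id]
    simp

end Eval2

section Eval3

variable {k : Type} [Field k] {B H : Type} [Ring B] [Algebra k B] [Ring H] [Bialgebra k H]
variable (α : H ⊗[k] B →ₗ[k] B) (σ : H ⊗[k] H →ₗ[k] B)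

open Coalgebra

lemma cpMul_tmul_one_right
    (hσ1 : ∀ h : H, σ (h ⊗ₜ (1:H)) = (counit (R := k) h) • (1:B)) (a b : B) (f : H) :
    cpMul k B H α σ ((a ⊗ₜ f) ⊗ₜ (b ⊗ₜ (1:H)))
      = rTensor H ((mulLeft k a) ∘ₗ actOn k B H α b) (comul f) := by
  rw [cpMul_tmul, Bialgebra.comul_one, Algebra.TensorProduct.one_def,
    Plmap_one_right α σ hσ1 b, comp_apply,
    ← comp_apply (rTensor H (epsR k H)), ← rTensor_comp, epsR_comul, rTensor_id,
    ← comp_apply (rTensor H (mulLeft k a)), ← rTensor_comp]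
  rfl

lemma cpMul_tmul_one_left (hWA : IsWeakAction k B H α) (a : B) (f g : H) :
    cpMul k B H α σ ((a ⊗ₜ f) ⊗ₜ ((1:B) ⊗ₜ g))
      = rTensor H (mulLeft k a) (Xmap σ (comul (R := k) g) (comul f)) := by
  rw [cpMul_tmul, Plmap_one_left α σ hWA, comp_apply,
    ← comp_apply (rTensor H (epsL k H)), ← rTensor_comp, epsL_comul, rTensor_id]
  rfl

lemma sigma_comp_mk_one
    (hσ2 : ∀ h : H, σ ((1:H) ⊗ₜ h) = (counit (R := k) h) • (1:B)) :
    σ ∘ₗ (TensorProduct.mk k H H (1:H)) = (Algebra.linearMap k B) ∘ₗ (counit (R := k)) := by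
  ext h; simp [hσ2, Algebra.algebraMap_eq_smul_one]

lemma cpMul_B_tmul (hone : ∀ b : B, α ((1:H) ⊗ₜ b) = b)
    (hσ2 : ∀ h : H, σ ((1:H) ⊗ₜ h) = (counit (R := k) h) • (1:B)) (b c : B) (g : H) :
    cpMul k B H α σ ((b ⊗ₜ (1:H)) ⊗ₜ (c ⊗ₜ g)) = (b * c) ⊗ₜ g := by
  rw [cpMul_tmul, Bialgebra.comul_one, Algebra.TensorProduct.one_def]
  rw [show (rTensor H (comul (R := k)) (((1:H) ⊗ₜ[k] (1:H)))) =
      ((1:H) ⊗ₜ[k] (1:H)) ⊗ₜ[k] (1:H) by simp [Algebra.TensorProduct.one_def]]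
  rw [Plmap]
  simp only [coe_comp, Function.comp_apply, LinearEquiv.coe_coe, TensorProduct.assoc_tmul,
    map_tmul, flip_apply, TensorProduct.mk_apply, ttt_tmul_left]
  rw [← comp_apply (TensorProduct.map σ (mul' k H)), ← TensorProduct.map_comp,
    sigma_comp_mk_one σ hσ2, mul'_comp_mk, mulLeft_one']
  have hc : actOn k B H α c (1:H) = c := by simp [actOn, hone]
  rw [hc, assoc_symm_tmul_left, ← comp_apply (rTensor H (mul' k B)), ← rTensor_comp,
    mul'_comp_mk]
  have hcol : (TensorProduct.map ((Algebra.linearMap k B) ∘ₗ (counit (R := k)))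
      (LinearMap.id (M := H))) (comul (R := k) g) = (1:B) ⊗ₜ[k] g := by
    have := rTensor_counit_comul (R := k) g
    rw [show (TensorProduct.map ((Algebra.linearMap k B) ∘ₗ (counit (R := k)))
        (LinearMap.id (M := H))) = rTensor H ((Algebra.linearMap k B) ∘ₗ (counit (R := k))) from rfl,
      rTensor_comp, comp_apply, this]
    simp
  rw [hcol]
  simp [mul'_apply]

lemma cpMul_one_one (hWA : IsWeakAction k B H α)
    (hσ1 : ∀ h : H, σ (h ⊗ₜ (1:H)) = (counit (R := k) h) • (1:B)) (x : B ⊗[k] H) :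
    cpMul k B H α σ (x ⊗ₜ ((1:B) ⊗ₜ (1:H))) = x := by
  induction x using TensorProduct.induction_on with
  | zero => simp [add_tmul, zero_tmul]
  | add u v hu hv => rw [add_tmul, map_add, hu, hv]
  | tmul a f =>
    rw [cpMul_tmul_one_right α σ hσ1, actOn_one α hWA, ← comp_assoc, rTensor_comp,
      comp_apply, rTensor_counit_comul]
    simp [mul'_apply]

end Eval3

section Eval4

variable {k : Type} [Field k] {B H : Type} [Ring B] [Algebra k B] [Ring H] [Bialgebra k H]
variable (α : H ⊗[k] B →ₗ[k] B) (σ : H ⊗[k] H →ₗ[k] B)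

open Coalgebra

/-- Left multiplication by `B` on `B ⊗ H`. -/
noncomputable def bact : B ⊗[k] (B ⊗[k] H) →ₗ[k] B ⊗[k] H :=
  (rTensor H (mul' k B)) ∘ₗ (TensorProduct.assoc k B B H).symm.toLinearMap

lemma bact_tmul (p : B) (z : B ⊗[k] H) :
    bact (p ⊗ₜ z) = rTensor H (mulLeft k p) z := by
  rw [bact, coe_comp, Function.comp_apply, LinearEquiv.coe_coe, rTensor_mul'_assoc_symm]

lemma actOn_mul (hWA : IsWeakAction k B H α) (b c : B) :
    actOn k B H α (b * c)
      = (mul' k B) ∘ₗ (TensorProduct.map (actOn k B H α b) (actOn k B H α c)) ∘ₗ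
        (comul (R := k)) := by
  ext h
  simp only [actOn, coe_comp, Function.comp_apply, flip_apply, TensorProduct.mk_apply]
  rw [hWA.smul_mul h b c, ttt_tmul_right, ← comp_apply (TensorProduct.map α α),
    ← TensorProduct.map_comp]

set_option maxHeartbeats 800000 in
lemma cpMul_assoc_BB (hWA : IsWeakAction k B H α)
    (hσ1 : ∀ h : H, σ (h ⊗ₜ (1:H)) = (counit (R := k) h) • (1:B))
    (x : B ⊗[k] H) (b c : B) :
    cpMul k B H α σ ((cpMul k B H α σ (x ⊗ₜ (b ⊗ₜ (1:H)))) ⊗ₜ (c ⊗ₜ (1:H)))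
      = cpMul k B H α σ (x ⊗ₜ ((b * c) ⊗ₜ (1:H))) := by
  induction x using TensorProduct.induction_on with
  | zero => simp
  | add u v hu hv => simp only [add_tmul, map_add, hu, hv]
  | tmul a f =>
    set θb : H →ₗ[k] B := (mulLeft k a) ∘ₗ actOn k B H α b with hθb
    have key : ∀ z : H ⊗[k] H,
        cpMul k B H α σ ((rTensor H θb z) ⊗ₜ (c ⊗ₜ (1:H)))
          = (bact ∘ₗ TensorProduct.map θb (rTensor H (actOn k B H α c)))
              ((lTensor H (comul (R := k))) z) := by
      intro z
      induction z using TensorProduct.induction_on with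
      | zero => simp
      | add u v hu hv => simp only [map_add, add_tmul, hu, hv]
      | tmul f₁ f₂ =>
        simp only [rTensor_tmul, lTensor_tmul, coe_comp, Function.comp_apply, map_tmul,
          bact_tmul]
        rw [cpMul_tmul_one_right α σ hσ1, rTensor_comp]
        rfl
    have mapB : (bact ∘ₗ TensorProduct.map θb (rTensor H (actOn k B H α c))) ∘ₗ
        (TensorProduct.assoc k H H H).toLinearMap
        = rTensor H ((mul' k B) ∘ₗ TensorProduct.map θb (actOn k B H α c)) := by
      apply TensorProduct.ext'
      intro T f₃
      induction T using TensorProduct.induction_on with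
      | zero => simp only [zero_tmul, map_zero]
      | add u v hu hv => simp only [add_tmul, map_add, hu, hv]
      | tmul f₁ f₂ => simp [bact_tmul, mul'_apply]
    have mapC : ((mul' k B) ∘ₗ TensorProduct.map θb (actOn k B H α c)) ∘ₗ (comul (R := k))
        = (mulLeft k a) ∘ₗ actOn k B H α (b * c) := by
      have this1 : (mul' k B) ∘ₗ TensorProduct.map θb (actOn k B H α c)
          = (mulLeft k a) ∘ₗ ((mul' k B) ∘ₗ
              TensorProduct.map (actOn k B H α b) (actOn k B H α c)) := by
        apply TensorProduct.ext'
        intro u v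
        simp [hθb, mul'_apply, mul_assoc]
      ext h
      rw [actOn_mul α hWA b c]
      simp only [coe_comp, Function.comp_apply]
      rw [← comp_apply (mul' k B) (TensorProduct.map θb (actOn k B H α c)), this1]
      simp
    rw [cpMul_tmul_one_right α σ hσ1 a b f, key, ← Coalgebra.coassoc_apply]
    have hmB := LinearMap.congr_fun mapB ((rTensor H (comul (R := k))) (comul f))
    simp only [coe_comp, Function.comp_apply, LinearEquiv.coe_coe] at hmB ⊢
    rw [hmB, cpMul_tmul_one_right α σ hσ1 a (b*c) f, ← mapC,
      ← comp_apply (rTensor H _) (rTensor H (comul (R := k))), ← rTensor_comp]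

lemma cpMul_assoc_Be (hWA : IsWeakAction k B H α)
    (hσ1 : ∀ h : H, σ (h ⊗ₜ (1:H)) = (counit (R := k) h) • (1:B))
    (x : B ⊗[k] H) (c : B) (g : H) :
    cpMul k B H α σ ((cpMul k B H α σ (x ⊗ₜ (c ⊗ₜ (1:H)))) ⊗ₜ ((1:B) ⊗ₜ g))
      = cpMul k B H α σ (x ⊗ₜ (c ⊗ₜ g)) := by
  induction x using TensorProduct.induction_on with
  | zero => simp
  | add u v hu hv => simp only [add_tmul, map_add, hu, hv]
  | tmul a f =>
    set θc : H →ₗ[k] B := (mulLeft k a) ∘ₗ actOn k B H α c with hθc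
    have key : ∀ z : H ⊗[k] H,
        cpMul k B H α σ ((rTensor H θc z) ⊗ₜ ((1:B) ⊗ₜ g))
          = (bact ∘ₗ TensorProduct.map θc (Xmap σ (comul (R := k) g)))
              ((lTensor H (comul (R := k))) z) := by
      intro z
      induction z using TensorProduct.induction_on with
      | zero => simp
      | add u v hu hv => simp only [map_add, add_tmul, hu, hv]
      | tmul f₁ f₂ =>
        simp only [rTensor_tmul, lTensor_tmul, coe_comp, Function.comp_apply, map_tmul,
          bact_tmul]
        rw [cpMul_tmul_one_left α σ hWA]
    have mapB : (bact ∘ₗ TensorProduct.map θc (Xmap σ (comul (R := k) g))) ∘ₗ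
        (TensorProduct.assoc k H H H).toLinearMap
        = rTensor H (mulLeft k a) ∘ₗ Plmap α σ c (comul (R := k) g) := by
      apply TensorProduct.ext'
      intro T f₃
      induction T using TensorProduct.induction_on with
      | zero => simp only [zero_tmul, map_zero]
      | add u v hu hv => simp only [add_tmul, map_add, hu, hv]
      | tmul f₁ f₂ =>
        simp only [coe_comp, Function.comp_apply, LinearEquiv.coe_coe,
          TensorProduct.assoc_tmul, map_tmul, bact_tmul, Plmap, Xmap,
          rTensor_mul'_assoc_symm]
        rw [← comp_apply (rTensor H (mulLeft k a)), ← rTensor_comp]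
        congr 1
        ext u
        simp [hθc, mul_assoc]
    rw [cpMul_tmul_one_right α σ hσ1 a c f, key, ← Coalgebra.coassoc_apply]
    have hmB := LinearMap.congr_fun mapB ((rTensor H (comul (R := k))) (comul f))
    simp only [coe_comp, Function.comp_apply, LinearEquiv.coe_coe] at hmB ⊢
    rw [hmB, cpMul_tmul α σ a c f g]

end Eval4

section RopSec

variable {k : Type} [Field k] {B : Type} [Ring B] [Algebra k B]
variable {C : Type} [AddCommGroup C] [Module k C] [Coalgebra k C]

open Coalgebra

/-- Generic `B`-left-multiplication on `B ⊗ C`. -/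
noncomputable def bactC : B ⊗[k] (B ⊗[k] C) →ₗ[k] B ⊗[k] C :=
  (rTensor C (mul' k B)) ∘ₗ (TensorProduct.assoc k B B C).symm.toLinearMap

lemma bactC_tmul (p : B) (z : B ⊗[k] C) :
    bactC (p ⊗ₜ z) = rTensor C (mulLeft k p) z := by
  rw [bactC, coe_comp, Function.comp_apply, LinearEquiv.coe_coe, rTensor_mul'_assoc_symm]

/-- The operator `p ⊗ c ↦ Σ p ν(c₁) ⊗ c₂` on `B ⊗ C`. -/
noncomputable def Rop (ν : C →ₗ[k] B) : B ⊗[k] C →ₗ[k] B ⊗[k] C :=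
  bactC ∘ₗ (lTensor B ((rTensor C ν) ∘ₗ (comul (R := k))))

lemma Rop_tmul (ν : C →ₗ[k] B) (p : B) (c : C) :
    Rop ν (p ⊗ₜ c) = rTensor C (mulLeft k p) (rTensor C ν (comul c)) := by
  simp only [Rop, coe_comp, Function.comp_apply, lTensor_tmul, bactC_tmul]

lemma rTensor_mulLeft_counit (p : B) (c : C) :
    rTensor C ((mulLeft k p) ∘ₗ (Algebra.linearMap k B) ∘ₗ (counit (R := k))) (comul c)
      = p ⊗ₜ c := by
  rw [rTensor_comp, rTensor_comp, comp_apply, comp_apply, rTensor_counit_comul]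
  simp

lemma Rop_comp (μ ν : C →ₗ[k] B) :
    (Rop ν) ∘ₗ (Rop μ) = Rop (conv k μ ν) := by
  apply TensorProduct.ext'
  intro p c
  simp only [coe_comp, Function.comp_apply, Rop_tmul]
  rw [← comp_apply (rTensor C (mulLeft k p)) (rTensor C μ), ← rTensor_comp]
  have claim : (Rop ν) ∘ₗ (rTensor C ((mulLeft k p) ∘ₗ μ))
      = bactC ∘ₗ (TensorProduct.map ((mulLeft k p) ∘ₗ μ) ((rTensor C ν) ∘ₗ comul)) := by
    apply TensorProduct.ext'
    intro c₁ c₂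
    simp only [coe_comp, Function.comp_apply, rTensor_tmul, map_tmul, Rop_tmul, bactC_tmul]
  rw [← comp_apply (Rop ν), claim]
  have split : TensorProduct.map ((mulLeft k p) ∘ₗ μ) ((rTensor C ν) ∘ₗ comul)
      = (TensorProduct.map ((mulLeft k p) ∘ₗ μ) (rTensor C ν)) ∘ₗ
        (lTensor C (comul (R := k))) := by
    apply TensorProduct.ext'; intro u v; simp
  rw [comp_apply, split, comp_apply, ← Coalgebra.coassoc_apply]
  have claim2 : bactC ∘ₗ (TensorProduct.map ((mulLeft k p) ∘ₗ μ) (rTensor C ν)) ∘ₗ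
      (TensorProduct.assoc k C C C).toLinearMap
      = rTensor C ((mulLeft k p) ∘ₗ (mul' k B) ∘ₗ (TensorProduct.map μ ν)) := by
    apply TensorProduct.ext'
    intro T c₃
    induction T using TensorProduct.induction_on with
    | zero => simp only [zero_tmul, map_zero]
    | add u v hu hv => simp only [add_tmul, map_add, hu, hv]
    | tmul c₁ c₂ => simp [bactC_tmul, mul'_apply, mul_assoc]
  have h2 := LinearMap.congr_fun claim2 ((rTensor C (comul (R := k))) (comul c))
  simp only [coe_comp, Function.comp_apply, LinearEquiv.coe_coe] at h2 ⊢
  rw [h2, ← comp_apply (rTensor C ((mulLeft k p) ∘ₗ (mul' k B) ∘ₗ (TensorProduct.map μ ν))),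
    ← rTensor_comp, ← comp_apply (rTensor C (mulLeft k p)), ← rTensor_comp]
  congr 1

lemma Rop_one : Rop (convOne k C B) = LinearMap.id := by
  apply TensorProduct.ext'
  intro p c
  rw [Rop_tmul, convOne, ← comp_apply (rTensor C (mulLeft k p)), ← rTensor_comp,
    rTensor_mulLeft_counit]
  rfl

end RopSec

section GmapSec

variable {k : Type} [Field k] {H : Type} [Ring H] [HopfAlgebra k H]

open Coalgebra

/-- `q ⊗ h ↦ Σ q h₁ ⊗ h₂`. -/
noncomputable def Gmap : H ⊗[k] H →ₗ[k] H ⊗[k] H :=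
  bactC ∘ₗ (lTensor H (comul (R := k)))

/-- `q ⊗ h ↦ Σ q S(h₁) ⊗ h₂`. -/
noncomputable def Gmap' : H ⊗[k] H →ₗ[k] H ⊗[k] H :=
  bactC ∘ₗ (lTensor H ((rTensor H (HopfAlgebra.antipode (R := k))) ∘ₗ (comul (R := k))))

lemma Gmap_tmul (q h : H) :
    Gmap (q ⊗ₜ h) = rTensor H (mulLeft k q) (comul h) := by
  simp only [Gmap, coe_comp, Function.comp_apply, lTensor_tmul, bactC_tmul]

lemma Gmap'_tmul (q h : H) :
    Gmap' (q ⊗ₜ h) = rTensor H ((mulLeft k q) ∘ₗ (HopfAlgebra.antipode (R := k))) (comul h) := by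
  simp only [Gmap', coe_comp, Function.comp_apply, lTensor_tmul, bactC_tmul]
  rw [← comp_apply (rTensor H (mulLeft k q)), ← rTensor_comp]

lemma Gmap_comp_Gmap' : Gmap ∘ₗ (Gmap' (k := k) (H := H)) = LinearMap.id := by
  apply TensorProduct.ext'
  intro q h
  simp only [coe_comp, Function.comp_apply, Gmap'_tmul, id_coe, id_eq]
  have claim : Gmap ∘ₗ (rTensor H ((mulLeft k q) ∘ₗ (HopfAlgebra.antipode (R := k))))
      = bactC ∘ₗ (TensorProduct.map ((mulLeft k q) ∘ₗ (HopfAlgebra.antipode (R := k)))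
          (comul (R := k))) := by
    apply TensorProduct.ext'
    intro x y
    simp only [coe_comp, Function.comp_apply, rTensor_tmul, map_tmul, Gmap_tmul, bactC_tmul]
  rw [← comp_apply Gmap, claim]
  have split : TensorProduct.map ((mulLeft k q) ∘ₗ (HopfAlgebra.antipode (R := k)))
      (comul (R := k))
      = (rTensor (H ⊗[k] H) ((mulLeft k q) ∘ₗ (HopfAlgebra.antipode (R := k)))) ∘ₗ
        (lTensor H (comul (R := k))) := by
    apply TensorProduct.ext'; intro u v; simp
  rw [comp_apply, split, comp_apply, ← Coalgebra.coassoc_apply]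
  have claim2 : bactC ∘ₗ (rTensor (H ⊗[k] H) ((mulLeft k q) ∘ₗ (HopfAlgebra.antipode (R := k)))) ∘ₗ
      (TensorProduct.assoc k H H H).toLinearMap
      = rTensor H ((mulLeft k q) ∘ₗ (mul' k H) ∘ₗ
          (rTensor H (HopfAlgebra.antipode (R := k)))) := by
    apply TensorProduct.ext'
    intro T z
    induction T using TensorProduct.induction_on with
    | zero => simp only [zero_tmul, map_zero]
    | add u v hu hv => simp only [add_tmul, map_add, hu, hv]
    | tmul x y => simp [bactC_tmul, mul'_apply, mul_assoc]
  have h2 := LinearMap.congr_fun claim2 ((rTensor H (comul (R := k))) (comul h))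
  simp only [coe_comp, Function.comp_apply, LinearEquiv.coe_coe] at h2 ⊢
  rw [h2, ← comp_apply (rTensor H _) (rTensor H (comul (R := k))), ← rTensor_comp]
  have final : ((mulLeft k q) ∘ₗ (mul' k H) ∘ₗ (rTensor H (HopfAlgebra.antipode (R := k)))) ∘ₗ
      (comul (R := k))
      = (mulLeft k q) ∘ₗ (Algebra.linearMap k H) ∘ₗ (counit (R := k)) := by
    ext x
    simp only [coe_comp, Function.comp_apply]
    rw [HopfAlgebra.mul_antipode_rTensor_comul_apply]
    rfl
  rw [final, rTensor_mulLeft_counit]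

lemma Gmap'_comp_Gmap : Gmap' ∘ₗ (Gmap (k := k) (H := H)) = LinearMap.id := by
  apply TensorProduct.ext'
  intro q h
  simp only [coe_comp, Function.comp_apply, Gmap_tmul, id_coe, id_eq]
  have claim : Gmap' ∘ₗ (rTensor H (mulLeft k q))
      = bactC ∘ₗ (TensorProduct.map (mulLeft k q)
          ((rTensor H (HopfAlgebra.antipode (R := k))) ∘ₗ (comul (R := k)))) := by
    apply TensorProduct.ext'
    intro x y
    simp only [coe_comp, Function.comp_apply, rTensor_tmul, map_tmul, Gmap'_tmul, bactC_tmul]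
    rw [rTensor_comp]
    rfl
  rw [← comp_apply Gmap', claim]
  have split : TensorProduct.map (mulLeft k q)
      ((rTensor H (HopfAlgebra.antipode (R := k))) ∘ₗ (comul (R := k)))
      = (lTensor H (rTensor H (HopfAlgebra.antipode (R := k)))) ∘ₗ
        (rTensor (H ⊗[k] H) (mulLeft k q)) ∘ₗ (lTensor H (comul (R := k))) := by
    apply TensorProduct.ext'; intro u v; simp
  rw [comp_apply, split, comp_apply, comp_apply, ← Coalgebra.coassoc_apply]
  have claim2 : bactC ∘ₗ (lTensor H (rTensor H (HopfAlgebra.antipode (R := k)))) ∘ₗ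
      (rTensor (H ⊗[k] H) (mulLeft k q)) ∘ₗ (TensorProduct.assoc k H H H).toLinearMap
      = rTensor H ((mulLeft k q) ∘ₗ (mul' k H) ∘ₗ
          (lTensor H (HopfAlgebra.antipode (R := k)))) := by
    apply TensorProduct.ext'
    intro T z
    induction T using TensorProduct.induction_on with
    | zero => simp only [zero_tmul, map_zero]
    | add u v hu hv => simp only [add_tmul, map_add, hu, hv]
    | tmul x y => simp [bactC_tmul, mul'_apply, mul_assoc]
  have h2 := LinearMap.congr_fun claim2 ((rTensor H (comul (R := k))) (comul h))
  simp only [coe_comp, Function.comp_apply, LinearEquiv.coe_coe] at h2 ⊢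
  rw [h2, ← comp_apply (rTensor H _) (rTensor H (comul (R := k))), ← rTensor_comp]
  have final : ((mulLeft k q) ∘ₗ (mul' k H) ∘ₗ (lTensor H (HopfAlgebra.antipode (R := k)))) ∘ₗ
      (comul (R := k))
      = (mulLeft k q) ∘ₗ (Algebra.linearMap k H) ∘ₗ (counit (R := k)) := by
    ext x
    simp only [coe_comp, Function.comp_apply]
    rw [HopfAlgebra.mul_antipode_lTensor_comul_apply]
    rfl
  rw [final, rTensor_mulLeft_counit]

end GmapSec

section PsiSec

variable {k : Type} [Field k] {B H : Type} [Ring B] [Algebra k B] [Ring H] [HopfAlgebra k H]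
variable (α : H ⊗[k] B →ₗ[k] B) (σ : H ⊗[k] H →ₗ[k] B)

open Coalgebra

/-- The operator `x ⊗ h ↦ can(x ⊗ (1 # h))` on `(B ⊗ H) ⊗ H`. -/
noncomputable def Psi : (B ⊗[k] H) ⊗[k] H →ₗ[k] (B ⊗[k] H) ⊗[k] H :=
  canMap k H (cpMul k B H α σ) (cpCoact k B H) ∘ₗ
    lTensor (B ⊗[k] H) ((TensorProduct.mk k B H) (1 : B))

lemma canMap_cp_tmul (x : B ⊗[k] H) (c : B) (g : H) :
    canMap k H (cpMul k B H α σ) (cpCoact k B H) (x ⊗ₜ (c ⊗ₜ g))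
      = rTensor H ((cpMul k B H α σ) ∘ₗ
          (TensorProduct.mk k (B ⊗[k] H) (B ⊗[k] H) x) ∘ₗ (TensorProduct.mk k B H c))
          (comul (R := k) g) := by
  rw [canMap, cpCoact]
  simp only [coe_comp, Function.comp_apply, LinearEquiv.coe_coe, lTensor_tmul]
  rw [assoc_symm_tmul_left, assoc_symm_tmul_left,
    ← comp_apply (rTensor H (cpMul k B H α σ)), ← rTensor_comp,
    ← comp_apply (rTensor H _) (rTensor H _), ← rTensor_comp, comp_assoc]

lemma Psi_tmul (x : B ⊗[k] H) (h : H) :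
    Psi α σ (x ⊗ₜ h)
      = rTensor H ((cpMul k B H α σ) ∘ₗ
          (TensorProduct.mk k (B ⊗[k] H) (B ⊗[k] H) x) ∘ₗ (TensorProduct.mk k B H (1:B)))
          (comul (R := k) h) := by
  rw [Psi, coe_comp, Function.comp_apply, lTensor_tmul, TensorProduct.mk_apply,
    canMap_cp_tmul]

/-- The mixed-associativity pairing used for the factorisation of `Psi`. -/
noncomputable def mu2 : (B ⊗[k] H) ⊗[k] (H ⊗[k] H) →ₗ[k] (B ⊗[k] H) ⊗[k] H :=
  (TensorProduct.assoc k B H H).symm.toLinearMap ∘ₗ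
    (lTensor B (bactC (B := H) (C := H))) ∘ₗ
    (TensorProduct.assoc k B H (H ⊗[k] H)).toLinearMap

set_option maxHeartbeats 1000000 in
lemma Psi_factor (hWA : IsWeakAction k B H α) :
    Psi α σ = (TensorProduct.assoc k B H H).symm.toLinearMap ∘ₗ (lTensor B Gmap) ∘ₗ
      (Rop σ) ∘ₗ (TensorProduct.assoc k B H H).toLinearMap := by
  apply TensorProduct.ext'
  intro x h
  induction x using TensorProduct.induction_on with
  | zero => simp only [zero_tmul, map_zero]
  | add u v hu hv => simp only [add_tmul, map_add, hu, hv]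
  | tmul p q =>
    set φσ : H ⊗[k] H →ₗ[k] B := (mulLeft k p) ∘ₗ σ with hφσ
    set Ymap : H ⊗[k] H →ₗ[k] B ⊗[k] H :=
      (rTensor H (mulLeft k p)) ∘ₗ (TensorProduct.map σ (mul' k H)) ∘ₗ
        (TensorProduct.tensorTensorTensorComm k H H H H).toLinearMap ∘ₗ
        (TensorProduct.mk k (H ⊗[k] H) (H ⊗[k] H) (comul (R := k) q)) with hYmap
    have Fid : (cpMul k B H α σ) ∘ₗ
        (TensorProduct.mk k (B ⊗[k] H) (B ⊗[k] H) (p ⊗ₜ q)) ∘ₗ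
        (TensorProduct.mk k B H (1:B)) = Ymap ∘ₗ (comul (R := k)) := by
      ext h'
      simp only [coe_comp, Function.comp_apply, TensorProduct.mk_apply, hYmap,
        LinearEquiv.coe_coe]
      rw [cpMul_tmul_one_left α σ hWA]
      simp [Xmap]
    -- the main map identity
    have mapmain : (rTensor H Ymap) ∘ₗ (TensorProduct.assoc k H H H).symm.toLinearMap ∘ₗ
        (lTensor H (comul (R := k)))
        = (TensorProduct.assoc k B H H).symm.toLinearMap ∘ₗ (lTensor B Gmap) ∘ₗ
          (rTensor (H ⊗[k] H) φσ) ∘ₗ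
          (TensorProduct.tensorTensorTensorComm k H H H H).toLinearMap ∘ₗ
          (TensorProduct.mk k (H ⊗[k] H) (H ⊗[k] H) (comul (R := k) q)) := by
      apply TensorProduct.ext'
      intro u v
      set Zx : B ⊗[k] H :=
        rTensor H (φσ ∘ₗ ((TensorProduct.mk k H H).flip u)) (comul (R := k) q) with hZx
      have CA : ∀ w : H ⊗[k] H,
          rTensor H (Ymap ∘ₗ (TensorProduct.mk k H H u)) w = mu2 (Zx ⊗ₜ w) := by
        intro w
        induction w using TensorProduct.induction_on with
        | zero => simp [tmul_zero]
        | add w₁ w₂ h₁ h₂ => simp only [map_add, tmul_add, h₁, h₂]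
        | tmul y₁ y₂ =>
          rw [rTensor_tmul, comp_apply, TensorProduct.mk_apply]
          -- compute Ymap (u ⊗ₜ y₁)
          rw [hYmap]
          simp only [coe_comp, Function.comp_apply, TensorProduct.mk_apply,
            LinearEquiv.coe_coe]
          rw [ttt_tmul_right, ← comp_apply (TensorProduct.map σ (mul' k H)),
            ← TensorProduct.map_comp,
            ← comp_apply (rTensor H (mulLeft k p)), rTensor_comp_map]
          -- now the μ₂ side
          rw [mu2]
          simp only [coe_comp, Function.comp_apply, LinearEquiv.coe_coe]
          rw [assoc_tmul_right, ← comp_apply (lTensor B (bactC (B := H) (C := H))),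
            ← lTensor_comp]
          have inner : (bactC (B := H) (C := H)) ∘ₗ
              ((TensorProduct.mk k H (H ⊗[k] H)).flip (y₁ ⊗ₜ y₂))
              = ((TensorProduct.mk k H H).flip y₂) ∘ₗ (mul' k H) ∘ₗ
                ((TensorProduct.mk k H H).flip y₁) := by
            ext t
            simp [bactC_tmul, mul'_apply]
          rw [inner, lTensor_comp, lTensor_comp, comp_apply, comp_apply,
            assoc_symm_lTensor_mk, hZx, ← comp_apply (lTensor B _) (rTensor H _),
            lTensor_comp_rTensor]
          rw [← comp_apply (lTensor B (mul' k H)), lTensor_comp_map, ← comp_assoc]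
      -- left side of mapmain at u ⊗ₜ v
      rw [coe_comp, coe_comp, Function.comp_apply, Function.comp_apply, lTensor_tmul,
        LinearEquiv.coe_coe, assoc_symm_tmul_left,
        ← comp_apply (rTensor H Ymap), ← rTensor_comp, CA (comul (R := k) v)]
      -- right side of mapmain at u ⊗ₜ v
      simp only [coe_comp, Function.comp_apply, TensorProduct.mk_apply, LinearEquiv.coe_coe]
      rw [ttt_tmul_right, ← comp_apply (rTensor (H ⊗[k] H) φσ), rTensor_comp_map,
        ← comp_apply (lTensor B Gmap), lTensor_comp_map]
      have GF : Gmap ∘ₗ ((TensorProduct.mk k H H).flip v)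
          = (bactC (B := H) (C := H)) ∘ₗ
            ((TensorProduct.mk k H (H ⊗[k] H)).flip (comul (R := k) v)) := by
        ext t
        simp only [coe_comp, Function.comp_apply, flip_apply, TensorProduct.mk_apply,
          Gmap_tmul, bactC_tmul]
      rw [GF]
      have split : TensorProduct.map (φσ ∘ₗ (TensorProduct.mk k H H).flip u)
          ((bactC (B := H) (C := H)) ∘ₗ
            ((TensorProduct.mk k H (H ⊗[k] H)).flip (comul (R := k) v)))
          = (lTensor B (bactC (B := H) (C := H))) ∘ₗ
            (lTensor B ((TensorProduct.mk k H (H ⊗[k] H)).flip (comul (R := k) v))) ∘ₗ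
            (rTensor H (φσ ∘ₗ (TensorProduct.mk k H H).flip u)) := by
        apply TensorProduct.ext'; intro a b; simp
      rw [split]
      simp only [coe_comp, Function.comp_apply]
      rw [mu2]
      simp only [coe_comp, Function.comp_apply, LinearEquiv.coe_coe]
      rw [assoc_tmul_right]
    have hmm := LinearMap.congr_fun mapmain (comul (R := k) h)
    simp only [coe_comp, Function.comp_apply, LinearEquiv.coe_coe] at hmm
    -- LHS
    rw [Psi_tmul, Fid, rTensor_comp, comp_apply, ← Coalgebra.coassoc_symm_apply, hmm]
    -- RHS
    simp only [coe_comp, Function.comp_apply, LinearEquiv.coe_coe, TensorProduct.assoc_tmul]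
    rw [Rop_tmul]
    have hcm : (comul (R := k) (q ⊗ₜ[k] h)) =
        (TensorProduct.tensorTensorTensorComm k H H H H)
          ((comul (R := k) q) ⊗ₜ (comul (R := k) h)) := by
      simp [TensorProduct.comul_tmul, AlgebraTensorModule.tensorTensorTensorComm_eq]
    rw [hcm, ← comp_apply (rTensor (H ⊗[k] H) (mulLeft k p)), ← rTensor_comp, ← hφσ]
    rfl

end PsiSec

section ThetaSec

variable {k : Type} [Field k] {B H : Type} [Ring B] [Algebra k B] [Ring H] [HopfAlgebra k H]
variable (α : H ⊗[k] B →ₗ[k] B) (σ : H ⊗[k] H →ₗ[k] B)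

open Coalgebra

lemma bij_of_inverse {M N : Type} [AddCommGroup M] [Module k M] [AddCommGroup N] [Module k N]
    (f : M →ₗ[k] N) (g : N →ₗ[k] M) (hfg : f ∘ₗ g = LinearMap.id)
    (hgf : g ∘ₗ f = LinearMap.id) : Function.Bijective f := by
  constructor
  · intro a b hab
    have ha := LinearMap.congr_fun hgf a
    have hb := LinearMap.congr_fun hgf b
    simp only [comp_apply, id_coe, id_eq] at ha hb
    rw [← ha, ← hb, hab]
  · intro y
    refine ⟨g y, ?_⟩
    have := LinearMap.congr_fun hfg y
    simpa using this

lemma Psi_bijective (hWA : IsWeakAction k B H α) (hinv : ConvInvertible k σ) :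
    Function.Bijective (Psi α σ) := by
  obtain ⟨τ, h1, h2⟩ := hinv
  rw [Psi_factor α σ hWA]
  have hR : Function.Bijective (Rop (B := B) σ) := by
    apply bij_of_inverse (Rop σ) (Rop τ)
    · rw [Rop_comp, h2, Rop_one]
    · rw [Rop_comp, h1, Rop_one]
  have hG : Function.Bijective (lTensor B (Gmap (k := k) (H := H))) := by
    apply bij_of_inverse _ (lTensor B Gmap')
    · rw [← lTensor_comp, Gmap_comp_Gmap', lTensor_id]
    · rw [← lTensor_comp, Gmap'_comp_Gmap, lTensor_id]
  simp only [coe_comp, LinearEquiv.coe_coe]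
  exact ((TensorProduct.assoc k B H H).symm.bijective.comp hG).comp
    (hR.comp (TensorProduct.assoc k B H H).bijective)

/-- The map `x ⊗ y ↦ x·(y_B # 1) ⊗ y_H` inducing `A ⊗_B A ≃ A ⊗ H`. -/
noncomputable def ThetaMap : (B ⊗[k] H) ⊗[k] (B ⊗[k] H) →ₗ[k] (B ⊗[k] H) ⊗[k] H :=
  (rTensor H (cpMul k B H α σ)) ∘ₗ
    (TensorProduct.assoc k (B ⊗[k] H) (B ⊗[k] H) H).symm.toLinearMap ∘ₗ
    (lTensor (B ⊗[k] H) (rTensor H ((TensorProduct.mk k B H).flip (1:H))))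

lemma Theta_tmul (x : B ⊗[k] H) (c : B) (g : H) :
    ThetaMap α σ (x ⊗ₜ (c ⊗ₜ g)) = (cpMul k B H α σ (x ⊗ₜ (c ⊗ₜ (1:H)))) ⊗ₜ g := by
  simp only [ThetaMap, coe_comp, Function.comp_apply, LinearEquiv.coe_coe, lTensor_tmul,
    rTensor_tmul, flip_apply, TensorProduct.mk_apply, TensorProduct.assoc_symm_tmul]

lemma Theta_ann (hWA : IsWeakAction k B H α)
    (hσ1 : ∀ h : H, σ (h ⊗ₜ (1:H)) = (counit (R := k) h) • (1:B))
    (hone : ∀ b : B, α ((1:H) ⊗ₜ b) = b)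
    (hσ2 : ∀ h : H, σ ((1:H) ⊗ₜ h) = (counit (R := k) h) • (1:B)) :
    midRel k (cpMul k B H α σ) (Set.range fun b : B => b ⊗ₜ[k] (1:H))
      ≤ ker (ThetaMap α σ) := by
  rw [midRel, Submodule.span_le]
  rintro z ⟨x, y, b', ⟨b, rfl⟩, rfl⟩
  simp only [SetLike.mem_coe, mem_ker, map_sub, sub_eq_zero]
  induction y using TensorProduct.induction_on with
  | zero => simp [tmul_zero]
  | add u v hu hv => simp only [tmul_add, map_add, hu, hv]
  | tmul c g =>
    rw [cpMul_B_tmul α σ hone hσ2, Theta_tmul, Theta_tmul,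
      cpMul_assoc_BB α σ hWA hσ1]

end ThetaSec
/-- the crossed product extension `A / B` is `H`-Galois: the canonical
map `A ⊗_B A → A ⊗ H` is bijective. -/
theorem crossed_product_galois (k B H : Type) [Field k] [Ring B] [Algebra k B] [Ring H] [HopfAlgebra k H]
    (α : H ⊗[k] B →ₗ[k] B) (σ : H ⊗[k] H →ₗ[k] B)
    (hWA : IsWeakAction k B H α) (hinv : ConvInvertible k σ)
    (hcoc : IsCocycle k B H α σ) (hTM : IsTwistedModule k B H α σ) :
    IsGalois k H (cpMul k B H α σ) (cpCoact k B H)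
      (Set.range (fun b : B => b ⊗ₜ[k] (1 : H))) := by
  have hσ1 := hcoc.norm_right
  have hσ2 := hcoc.norm_left
  have hone := hTM.one_smul
  set R := midRel k (cpMul k B H α σ) (Set.range (fun b : B => b ⊗ₜ[k] (1 : H))) with hR
  have hker : R ≤ ker (ThetaMap α σ) := Theta_ann α σ hWA hσ1 hone hσ2
  set Θbar := R.liftQ (ThetaMap α σ) hker with hΘbar
  refine ⟨(Psi α σ) ∘ₗ Θbar, ?_, ?_⟩
  · -- compatibility with the canonical map
    apply TensorProduct.ext'
    intro x y
    induction y using TensorProduct.induction_on with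
    | zero => simp [tmul_zero]
    | add u v hu hv => simp only [tmul_add, map_add, hu, hv]
    | tmul c g =>
      simp only [coe_comp, Function.comp_apply, Submodule.mkQ_apply, hΘbar,
        Submodule.liftQ_apply]
      rw [Theta_tmul, Psi_tmul, canMap_cp_tmul]
      congr 2
      ext h'
      simp only [coe_comp, Function.comp_apply, TensorProduct.mk_apply]
      exact cpMul_assoc_Be α σ hWA hσ1 x c h'
  · -- bijectivity
    have hXi1 : Θbar ∘ₗ (R.mkQ ∘ₗ lTensor (B ⊗[k] H) ((TensorProduct.mk k B H) (1:B)))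
        = LinearMap.id := by
      apply TensorProduct.ext'
      intro x h
      simp only [coe_comp, Function.comp_apply, lTensor_tmul, TensorProduct.mk_apply,
        Submodule.mkQ_apply, hΘbar, Submodule.liftQ_apply, id_coe, id_eq]
      rw [Theta_tmul, cpMul_one_one α σ hWA hσ1]
    have hXi2 : (R.mkQ ∘ₗ lTensor (B ⊗[k] H) ((TensorProduct.mk k B H) (1:B))) ∘ₗ Θbar
        = LinearMap.id := by
      apply Submodule.linearMap_qext
      apply TensorProduct.ext'
      intro x y
      induction y using TensorProduct.induction_on with
      | zero => simp [tmul_zero]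
      | add u v hu hv => simp only [tmul_add, map_add, hu, hv]
      | tmul c g =>
        simp only [coe_comp, Function.comp_apply, Submodule.mkQ_apply, hΘbar,
          Submodule.liftQ_apply, id_coe, id_eq]
        rw [Theta_tmul]
        simp only [lTensor_tmul, TensorProduct.mk_apply]
        rw [Submodule.Quotient.eq]
        apply Submodule.subset_span
        refine ⟨x, (1:B) ⊗ₜ g, c ⊗ₜ (1:H), ⟨c, rfl⟩, ?_⟩
        rw [cpMul_B_tmul α σ hone hσ2, mul_one]
    have hTb : Function.Bijective Θbar :=
      bij_of_inverse Θbar (R.mkQ ∘ₗ lTensor (B ⊗[k] H) ((TensorProduct.mk k B H) (1:B)))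
        hXi1 hXi2
    have hPb : Function.Bijective (Psi α σ) := Psi_bijective α σ hWA hinv
    rw [coe_comp]
    exact hPb.comp hTb

end CrossedGalois
end
end

section
/- In the setting of a Galois extension A/B with splitting data as in the converse direction of the main theorem, the convolution inverse γ⁻¹ of γ = Φ(1 ⊗ -) satisfies ψ(γ⁻¹(h)) = Σ γ⁻¹(h₍₂₎) ⊗ S(h₍₁₎) for all h ∈ H, where ψ is the H-coaction on A and S is the antipode. -/
open TensorProduct LinearMap

noncomputable section

namespace CrossedGalois

section ConvLemmas

open Coalgebra

variable (k : Type) [Field k] {C B B' : Type} [AddCommGroup C] [Module k C] [Coalgebra k C]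
  [Ring B] [Algebra k B] [Ring B'] [Algebra k B']

lemma conv_repr (f g : C →ₗ[k] B) {c : C} {ι : Type*} (repr : Coalgebra.Repr k c ι) :
    conv k f g c = ∑ i ∈ repr.index, f (repr.left i) * g (repr.right i) := by
  simp only [conv, LinearMap.comp_apply, ← repr.eq, map_sum, TensorProduct.map_tmul,
    LinearMap.mul'_apply]

lemma convOne_apply (c : C) : convOne k C B c = algebraMap k B (counit (R := k) c) := rfl

lemma conv_one_left (f : C →ₗ[k] B) : conv k (convOne k C B) f = f := by
  ext c
  have key := Coalgebra.sum_counit_tmul_map_eq (R := k) f c (repr := ℛ k c)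
  apply_fun (TensorProduct.lid k B) at key
  simp only [map_sum, TensorProduct.lid_tmul, one_smul] at key
  rw [conv_repr k _ _ (ℛ k c), ← key]
  refine Finset.sum_congr rfl fun i _ => ?_
  rw [convOne_apply, ← Algebra.smul_def]

lemma conv_one_right (f : C →ₗ[k] B) : conv k f (convOne k C B) = f := by
  ext c
  have key := Coalgebra.sum_map_tmul_counit_eq (R := k) f c (repr := ℛ k c)
  apply_fun (TensorProduct.rid k B) at key
  simp only [map_sum, TensorProduct.rid_tmul, one_smul] at key
  rw [conv_repr k _ _ (ℛ k c), ← key]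
  refine Finset.sum_congr rfl fun i _ => ?_
  rw [convOne_apply, ← Algebra.commutes, ← Algebra.smul_def]

lemma conv_assoc (f g h : C →ₗ[k] B) :
    conv k (conv k f g) h = conv k f (conv k g h) := by
  ext c
  set repr := ℛ k c with hrepr
  have key := Coalgebra.sum_map_tmul_tmul_eq (f := f) (g := g) (h := h) c (repr := repr)
      (a₁ := fun i => ℛ k (repr.left i)) (a₂ := fun i => ℛ k (repr.right i))
  apply_fun (LinearMap.mul' k B ∘ₗ LinearMap.lTensor B (LinearMap.mul' k B)) at key
  simp only [map_sum, LinearMap.comp_apply, LinearMap.lTensor_tmul, LinearMap.mul'_apply] at key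
  rw [conv_repr k _ _ repr, conv_repr k _ _ repr]
  have e1 : ∑ i ∈ repr.index, conv k f g (repr.left i) * h (repr.right i)
      = ∑ i ∈ repr.index, ∑ j ∈ (ℛ k (repr.left i)).index,
          f ((ℛ k (repr.left i)).left j) *
            (g ((ℛ k (repr.left i)).right j) * h (repr.right i)) := by
    refine Finset.sum_congr rfl fun i _ => ?_
    rw [conv_repr k f g (ℛ k (repr.left i)), Finset.sum_mul]
    exact Finset.sum_congr rfl fun j _ => mul_assoc _ _ _
  have e2 : ∑ i ∈ repr.index, f (repr.left i) * conv k g h (repr.right i)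
      = ∑ i ∈ repr.index, ∑ j ∈ (ℛ k (repr.right i)).index,
          f (repr.left i) *
            (g ((ℛ k (repr.right i)).left j) * h ((ℛ k (repr.right i)).right j)) := by
    refine Finset.sum_congr rfl fun i _ => ?_
    rw [conv_repr k g h (ℛ k (repr.right i)), Finset.mul_sum]
  rw [e1, e2]
  exact key.symm

lemma comp_conv (φ : B →ₗ[k] B') (hm : ∀ x y : B, φ (x * y) = φ x * φ y) (f g : C →ₗ[k] B) :
    φ ∘ₗ conv k f g = conv k (φ ∘ₗ f) (φ ∘ₗ g) := by
  ext c
  rw [LinearMap.comp_apply, conv_repr k f g (ℛ k c), map_sum, conv_repr k _ _ (ℛ k c)]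
  exact Finset.sum_congr rfl fun i _ => hm _ _

lemma comp_convOne (φ : B →ₗ[k] B') (h1 : φ 1 = 1) :
    φ ∘ₗ convOne k C B = convOne k C B' := by
  ext c
  simp only [LinearMap.comp_apply, convOne_apply, Algebra.algebraMap_eq_smul_one, map_smul, h1]

end ConvLemmas

open Coalgebra in
lemma conv_antipode_id (k H : Type) [Field k] [Ring H] [HopfAlgebra k H] :
    conv k (HopfAlgebra.antipode (R := k) (A := H)) LinearMap.id = convOne k H H := by
  ext h
  rw [conv_repr k _ _ (ℛ k h), convOne_apply]
  simp [HopfAlgebra.sum_antipode_mul_eq_algebraMap_counit (ℛ k h)]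

/-- the convolution inverse `γ⁻¹` of the colinear map `γ` satisfies
`ψ(γ⁻¹(h)) = Σ γ⁻¹(h₂) ⊗ S(h₁)`. -/
theorem coaction_of_gamma_inverse
    (k A H : Type) [Field k] [Ring A] [Algebra k A] [Ring H] [HopfAlgebra k H]
    (ρ : A →ₗ[k] A ⊗[k] H) (hA : IsComodAlg k H ρ)
    (γ μ : H →ₗ[k] A)
    (hγcolin : ∀ h : H, ρ (γ h) = (rTensor H γ) (Coalgebra.comul (R := k) h))
    (hconv : conv k γ μ = convOne k H A ∧ conv k μ γ = convOne k H A) :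
    ∀ h : H, ρ (μ h) =
      (TensorProduct.map μ (HopfAlgebra.antipode (R := k)))
        ((TensorProduct.comm k H H) (Coalgebra.comul (R := k) h)) := by
  open Coalgebra in
  obtain ⟨hγμ, hμγ⟩ := hconv
  set ι₁ : A →ₗ[k] A ⊗[k] H :=
    (Algebra.TensorProduct.includeLeft : A →ₐ[k] A ⊗[k] H).toLinearMap with hι₁
  set ι₂ : H →ₗ[k] A ⊗[k] H :=
    (Algebra.TensorProduct.includeRight : H →ₐ[k] A ⊗[k] H).toLinearMap with hι₂
  have hι₁m : ∀ x y : A, ι₁ (x * y) = ι₁ x * ι₁ y := fun x y =>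
    map_mul (Algebra.TensorProduct.includeLeft : A →ₐ[k] A ⊗[k] H) x y
  have hι₂m : ∀ x y : H, ι₂ (x * y) = ι₂ x * ι₂ y := fun x y =>
    map_mul (Algebra.TensorProduct.includeRight : H →ₐ[k] A ⊗[k] H) x y
  have hι₁1 : ι₁ 1 = 1 := map_one (Algebra.TensorProduct.includeLeft : A →ₐ[k] A ⊗[k] H)
  have hι₂1 : ι₂ 1 = 1 := map_one (Algebra.TensorProduct.includeRight : H →ₐ[k] A ⊗[k] H)
  -- ρ ∘ γ is a convolution product
  have hF : ρ ∘ₗ γ = conv k (ι₁ ∘ₗ γ) ι₂ := by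
    ext h
    rw [LinearMap.comp_apply, hγcolin h, conv_repr k _ _ (ℛ k h), ← (ℛ k h).eq, map_sum]
    refine Finset.sum_congr rfl fun i _ => ?_
    simp only [LinearMap.rTensor_tmul, LinearMap.comp_apply, hι₁, hι₂,
      AlgHom.toLinearMap_apply, Algebra.TensorProduct.includeLeft_apply,
      Algebra.TensorProduct.includeRight_apply, Algebra.TensorProduct.tmul_mul_tmul,
      mul_one, one_mul]
  -- the claimed formula is a convolution product
  set G : H →ₗ[k] A ⊗[k] H :=
    (TensorProduct.map μ (HopfAlgebra.antipode (R := k))) ∘ₗ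
      (TensorProduct.comm k H H).toLinearMap ∘ₗ (Coalgebra.comul (R := k)) with hGdef
  have hG : G = conv k (ι₂ ∘ₗ (HopfAlgebra.antipode (R := k))) (ι₁ ∘ₗ μ) := by
    ext h
    rw [hGdef, LinearMap.comp_apply, LinearMap.comp_apply, conv_repr k _ _ (ℛ k h),
      ← (ℛ k h).eq, map_sum, map_sum]
    refine Finset.sum_congr rfl fun i _ => ?_
    simp only [LinearEquiv.coe_coe, TensorProduct.comm_tmul, TensorProduct.map_tmul,
      LinearMap.comp_apply, hι₁, hι₂, AlgHom.toLinearMap_apply,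
      Algebra.TensorProduct.includeLeft_apply, Algebra.TensorProduct.includeRight_apply,
      Algebra.TensorProduct.tmul_mul_tmul, mul_one, one_mul]
  -- (ρ∘γ) * (ρ∘μ) = 1
  have hFμ : conv k (ρ ∘ₗ γ) (ρ ∘ₗ μ) = convOne k H (A ⊗[k] H) := by
    rw [← comp_conv k ρ hA.mul γ μ, hγμ, comp_convOne k ρ hA.one]
  -- G * (ρ∘γ) = 1
  have hGF : conv k G (ρ ∘ₗ γ) = convOne k H (A ⊗[k] H) := by
    rw [hG, hF, conv_assoc, ← conv_assoc k (ι₁ ∘ₗ μ), ← comp_conv k ι₁ hι₁m μ γ, hμγ,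
      comp_convOne k ι₁ hι₁1, conv_one_left]
    have h2 : conv k (ι₂ ∘ₗ (HopfAlgebra.antipode (R := k))) (ι₂ ∘ₗ LinearMap.id) =
        convOne k H (A ⊗[k] H) := by
      rw [← comp_conv k ι₂ hι₂m, conv_antipode_id, comp_convOne k ι₂ hι₂1]
    rwa [LinearMap.comp_id] at h2
  -- uniqueness of convolution inverses
  have main : G = ρ ∘ₗ μ := by
    calc G = conv k G (convOne k H (A ⊗[k] H)) := (conv_one_right k G).symm
      _ = conv k G (conv k (ρ ∘ₗ γ) (ρ ∘ₗ μ)) := by rw [hFμ]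
      _ = conv k (conv k G (ρ ∘ₗ γ)) (ρ ∘ₗ μ) := (conv_assoc k _ _ _).symm
      _ = conv k (convOne k H (A ⊗[k] H)) (ρ ∘ₗ μ) := by rw [hGF]
      _ = ρ ∘ₗ μ := conv_one_left k _
  intro h
  have := LinearMap.congr_fun main h
  simpa [hGdef] using this.symm

end CrossedGalois
end
end
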